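/- Let Q ∈ SO(3) and let u ∈ ℝ³ be a unit vector. Then uᵀQu ≥ (tr(Q) − 1)/2. In particular, if Ψ(Q) = (1/2)tr(I₃ − Q) < 1, then e₃ᵀQe₃ > 0, where e₃ = (0,0,1)ᵀ. -/
import Mathlib
open Matrix

private lemma keyK (Q : Matrix (Fin 3) (Fin 3) ℝ) (hQ : Qᵀ * Q = 1) (hdet : Q.det = 1) :
    Q * Q = Q.trace • Q - Q.trace • (1 : Matrix (Fin 3) (Fin 3) ℝ) + Qᵀ := by
  have hadj : Qᵀ = Q.adjugate := by
    have h1 : Q * Q.adjugate = 1 := by rw [Matrix.mul_adjugate, hdet, one_smul]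
    calc Qᵀ = Qᵀ * (Q * Q.adjugate) := by rw [h1, mul_one]
    _ = (Qᵀ * Q) * Q.adjugate := by rw [mul_assoc]
    _ = Q.adjugate := by rw [hQ, one_mul]
  have H : ∀ i j, Q j i = Q.adjugate i j := fun i j => congrFun (congrFun hadj i) j
  have h00 := H 0 0; have h01 := H 0 1; have h02 := H 0 2
  have h10 := H 1 0; have h11 := H 1 1; have h12 := H 1 2
  have h20 := H 2 0; have h21 := H 2 1; have h22 := H 2 2
  simp only [Matrix.adjugate_fin_three, Matrix.of_apply, Matrix.cons_val', Matrix.cons_val_zero,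
    Matrix.cons_val_one, Matrix.head_cons, Matrix.empty_val', Matrix.cons_val_fin_one,
    Matrix.head_fin_const, Matrix.cons_val_two, Matrix.tail_cons] at h00 h01 h02 h10 h11 h12 h20 h21 h22
  rw [Matrix.trace_fin_three]
  ext i j
  fin_cases i <;> fin_cases j <;>
    simp [Matrix.mul_apply, Fin.sum_univ_three, Matrix.one_apply] <;>
    linarith [h00, h01, h02, h10, h11, h12, h20, h21, h22,
      mul_self_nonneg (0:ℝ)]

private lemma so3_lb (Q : Matrix (Fin 3) (Fin 3) ℝ)
    (hQ : Qᵀ * Q = 1) (hdet : Q.det = 1)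
    (u : Fin 3 → ℝ) (hu : u ⬝ᵥ u = 1) :
    u ⬝ᵥ Q.mulVec u ≥ (Q.trace - 1) / 2 := by
  have hQQ' : Q * Qᵀ = 1 := mul_eq_one_comm.mp hQ
  set t := Q.trace with ht
  have K' : Qᵀ * Qᵀ = t • Qᵀ - t • (1 : Matrix (Fin 3) (Fin 3) ℝ) + Q := by
    have := keyK Qᵀ (by rwa [transpose_transpose]) (by rwa [Matrix.det_transpose])
    simpa [Matrix.trace_transpose] using this
  have hAB : ∀ A B : Matrix (Fin 3) (Fin 3) ℝ,
      (A *ᵥ u) ⬝ᵥ (B *ᵥ u) = u ⬝ᵥ ((Aᵀ * B) *ᵥ u) := by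
    intro A B
    rw [dotProduct_mulVec, Matrix.vecMul_mulVec, ← dotProduct_mulVec]
  set x := u ⬝ᵥ Q *ᵥ u with hx
  have hsym : u ⬝ᵥ Qᵀ *ᵥ u = x := by
    rw [Matrix.mulVec_transpose, dotProduct_comm, ← dotProduct_mulVec]
  have h1 : (Q *ᵥ u) ⬝ᵥ (Q *ᵥ u) = 1 := by rw [hAB, hQ, Matrix.one_mulVec, hu]
  have h2 : (Qᵀ *ᵥ u) ⬝ᵥ (Qᵀ *ᵥ u) = 1 := by
    rw [hAB, transpose_transpose, hQQ', Matrix.one_mulVec, hu]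
  have h3 : (Q *ᵥ u) ⬝ᵥ (Qᵀ *ᵥ u) = t * x - t + x := by
    rw [hAB, K']
    simp only [Matrix.add_mulVec, Matrix.sub_mulVec, Matrix.smul_mulVec,
      Matrix.one_mulVec, dotProduct_add, dotProduct_sub, dotProduct_smul,
      smul_eq_mul, hsym, hu, hx]
    ring
  have h4 : (Q *ᵥ u) ⬝ᵥ u = x := by rw [dotProduct_comm]
  have h5 : (Qᵀ *ᵥ u) ⬝ᵥ u = x := by rw [dotProduct_comm, hsym]
  set w : Fin 3 → ℝ := Q *ᵥ u + Qᵀ *ᵥ u - (t - 1) • u with hw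
  have hw_u : u ⬝ᵥ w = 2 * x - (t - 1) := by
    simp only [hw, dotProduct_sub, dotProduct_add, dotProduct_smul, smul_eq_mul,
      hu, hsym, hx]
    ring
  have hww : w ⬝ᵥ w = (3 - t) * (u ⬝ᵥ w) := by
    have h3' : (Qᵀ *ᵥ u) ⬝ᵥ (Q *ᵥ u) = t * x - t + x := by
      rw [dotProduct_comm]; exact h3
    simp only [hw, dotProduct_sub, dotProduct_add, dotProduct_smul,
      sub_dotProduct, add_dotProduct, smul_dotProduct, smul_eq_mul,
      h1, h2, h3, h3', h4, h5, hsym, hu, hx]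
    ring
  have ht3 : t ≤ 3 := by
    have e0 := congrFun (congrFun hQ 0) 0
    have e1 := congrFun (congrFun hQ 1) 1
    have e2 := congrFun (congrFun hQ 2) 2
    simp [Matrix.mul_apply, Fin.sum_univ_three, Matrix.one_apply] at e0 e1 e2
    rw [ht, Matrix.trace_fin_three]
    nlinarith [sq_nonneg (Q 0 0 - 1), sq_nonneg (Q 1 1 - 1), sq_nonneg (Q 2 2 - 1),
      sq_nonneg (Q 1 0), sq_nonneg (Q 2 0), sq_nonneg (Q 0 1), sq_nonneg (Q 2 1),
      sq_nonneg (Q 0 2), sq_nonneg (Q 1 2)]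
  have hwnn : 0 ≤ w ⬝ᵥ w := by
    unfold dotProduct
    exact Finset.sum_nonneg fun i _ => mul_self_nonneg _
  have h0 : 0 ≤ u ⬝ᵥ w := by
    by_contra hneg
    push_neg at hneg
    have hle : w ⬝ᵥ w ≤ 0 := by nlinarith
    have hz : w ⬝ᵥ w = 0 := le_antisymm hle hwnn
    have : w = 0 := dotProduct_self_eq_zero.mp hz
    rw [this] at hneg
    simp at hneg
  linarith [hw_u ▸ h0]

/-- For `Q ∈ SO(3)` and a unit vector `u`, `uᵀQu ≥ (tr Q − 1)/2`; in particular,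
if `Ψ(Q) = (1/2)tr(I₃ − Q) < 1` then `e₃ᵀQe₃ > 0`. -/
theorem so3_quadratic_form_lower_bound (Q : Matrix (Fin 3) (Fin 3) ℝ)
    (hQ : Qᵀ * Q = 1) (hdet : Q.det = 1)
    (u : Fin 3 → ℝ) (hu : u ⬝ᵥ u = 1) :
    u ⬝ᵥ Q.mulVec u ≥ (Q.trace - 1) / 2 ∧
    ((1 / 2) * (1 - Q : Matrix (Fin 3) (Fin 3) ℝ).trace < 1 →
      0 < (![0, 0, 1] : Fin 3 → ℝ) ⬝ᵥ Q.mulVec ![0, 0, 1]) := by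
  refine ⟨so3_lb Q hQ hdet u hu, fun h => ?_⟩
  have he3 : (![0, 0, 1] : Fin 3 → ℝ) ⬝ᵥ ![0, 0, 1] = 1 := by
    simp [dotProduct, Fin.sum_univ_three]
  have hlb := so3_lb Q hQ hdet ![0, 0, 1] he3
  have htr : (1 - Q : Matrix (Fin 3) (Fin 3) ℝ).trace = 3 - Q.trace := by
    rw [Matrix.trace_sub, Matrix.trace_one]
    norm_num
  rw [htr] at h
  have : (1 : ℝ) < Q.trace := by linarith
  linarith
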